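/- arXiv:1912.00614 — 3 statements merged into one kernel-verified Lean document; each statement's English description precedes it below -/
import Mathlib

section
/- For every clutter C over ground set V, the blocker of the blocker of C equals C. -/
/-- `B` is a cover of the clutter `C`: it intersects every member. -/
def IsCover {V : Type*} [DecidableEq V] (C : Set (Finset V)) (B : Finset V) : Prop :=
  ∀ A ∈ C, (A ∩ B).Nonempty

/-- The blocker of `C`: the family of inclusion-minimal covers of `C`. -/
def Blocker {V : Type*} [DecidableEq V] (C : Set (Finset V)) : Set (Finset V) :=
  {B | IsCover C B ∧ ∀ B' ⊆ B, IsCover C B' → B' = B}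

/-- Every cover contains a minimal cover. -/
lemma exists_min_cover {V : Type*} [DecidableEq V] (C : Set (Finset V)) :
    ∀ B : Finset V, IsCover C B → ∃ B' ∈ Blocker C, B' ⊆ B := by
  intro B
  induction B using Finset.strongInduction with
  | _ B ih =>
    intro h
    by_cases hmin : ∀ B' ⊆ B, IsCover C B' → B' = B
    · exact ⟨B, ⟨h, hmin⟩, subset_rfl⟩
    · push_neg at hmin
      obtain ⟨B', hB'sub, hB'cov, hne⟩ := hmin
      obtain ⟨B'', hB'', hsub⟩ := ih B' (hB'sub.ssubset_of_ne hne) hB'cov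
      exact ⟨B'', hB'', hsub.trans hB'sub⟩

/-- Every member of `C` covers the blocker of `C`. -/
lemma mem_isCover_blocker {V : Type*} [DecidableEq V] (C : Set (Finset V))
    {A : Finset V} (hA : A ∈ C) : IsCover (Blocker C) A := by
  intro B hB
  obtain ⟨x, hx⟩ := hB.1 A hA
  rw [Finset.mem_inter] at hx
  exact ⟨x, Finset.mem_inter.mpr ⟨hx.2, hx.1⟩⟩

/-- Every cover of the blocker contains a member of `C`. -/
lemma cover_blocker_contains {V : Type*} [Fintype V] [DecidableEq V] (C : Set (Finset V))
    {A' : Finset V} (h : IsCover (Blocker C) A') : ∃ A ∈ C, A ⊆ A' := by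
  by_contra hc
  push_neg at hc
  have hcov : IsCover C (A'ᶜ) := by
    intro A hA
    obtain ⟨x, hx, hx'⟩ := Finset.not_subset.mp (hc A hA)
    exact ⟨x, Finset.mem_inter.mpr ⟨hx, Finset.mem_compl.mpr hx'⟩⟩
  obtain ⟨B, hB, hsub⟩ := exists_min_cover C _ hcov
  obtain ⟨x, hx⟩ := h B hB
  rw [Finset.mem_inter] at hx
  exact Finset.mem_compl.mp (hsub hx.1) hx.2

/-- For every clutter `C`, the blocker of the blocker of `C` equals `C`. -/
theorem stmt_2 {V : Type*} [Fintype V] [DecidableEq V] (C : Set (Finset V))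
    (hclutter : ∀ A ∈ C, ∀ B ∈ C, A ⊆ B → A = B) :
    Blocker (Blocker C) = C := by
  ext A'
  constructor
  · rintro ⟨hcov, hmin⟩
    obtain ⟨A, hA, hsub⟩ := cover_blocker_contains C hcov
    rwa [← hmin A hsub (mem_isCover_blocker C hA)]
  · intro hA
    refine ⟨mem_isCover_blocker C hA, fun B' hB' hcov => ?_⟩
    obtain ⟨A'', hA'', hsub⟩ := cover_blocker_contains C hcov
    have := hclutter A'' hA'' A' hA (hsub.trans hB')
    exact Finset.Subset.antisymm hB' (this ▸ hsub)
end

section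
/- Let S be the cocycle space of PG(l-1,2), viewed as a subset of {0,1}^{2^l - 1}. Then the cuboid of S is an l-wise intersecting clutter: every at most l members have a common element, yet no element belongs to all members. -/
/-- The ground set of `PG(l-1,2)`: the nonzero vectors of `GF(2)^l`. -/
abbrev PGpt (l : ℕ) := {v : Fin l → ZMod 2 // v ≠ 0}

/-- The cocycle space of `PG(l-1,2)`, viewed as a set of 0-1 points indexed by the ground
set: the row space of the representation matrix, i.e. all maps `v ↦ u · v`. -/
def PGcocycleSpace (l : ℕ) : Set (PGpt l → ZMod 2) :=
  {p | ∃ u : Fin l → ZMod 2, ∀ v : PGpt l, p v = ∑ i, u i * v.1 i}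

/-- The member of the cuboid corresponding to a point `p`: element `(v, a)` belongs to it
iff `p v = a`. -/
def cubMember {l : ℕ} (p : PGpt l → ZMod 2) : Set (PGpt l × ZMod 2) :=
  {x | x.2 = p x.1}

/-- For `S` the cocycle space of `PG(l-1,2)`, the cuboid of `S` is an `l`-wise
intersecting clutter: every at most `l` members have a common element, yet no element belongs
to all members. -/
theorem stmt_14 (l : ℕ) (hl : 1 ≤ l) :
    (∀ F : Finset (PGpt l → ZMod 2), ↑F ⊆ PGcocycleSpace l → F.card ≤ l →
      ∃ x : PGpt l × ZMod 2, ∀ p ∈ F, x ∈ cubMember p) ∧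
    ¬ ∃ x : PGpt l × ZMod 2, ∀ p ∈ PGcocycleSpace l, x ∈ cubMember p := by
  classical
  have hone : ((fun _ : Fin l => (1 : ZMod 2))) ≠ 0 := by
    intro h
    have := congrFun h ⟨0, hl⟩
    simp at this
  constructor
  · intro F hF hcard
    rcases F.eq_empty_or_nonempty with rfl | ⟨p0, hp0⟩
    · exact ⟨(⟨fun _ => 1, hone⟩, 0), by simp⟩
    have hch : ∀ p ∈ F, ∃ u : Fin l → ZMod 2, ∀ v : PGpt l, p v = ∑ i, u i * v.1 i :=
      fun p hp => hF hp
    choose U hU using hch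
    set F' : Finset (PGpt l → ZMod 2) := F.erase p0 with hF'
    set M : Matrix {q // q ∈ F'} (Fin l) (ZMod 2) :=
      fun q i => U q.1 (F.mem_of_mem_erase q.2) i - U p0 hp0 i with hM
    have hcard' : Fintype.card {q // q ∈ F'} < l := by
      rw [Fintype.card_coe, hF', Finset.card_erase_of_mem hp0]
      have h1 : 1 ≤ F.card := Finset.card_pos.mpr ⟨p0, hp0⟩
      omega
    have hker : LinearMap.ker M.mulVecLin ≠ ⊥ := by
      intro h
      have hinj : Function.Injective M.mulVecLin := LinearMap.ker_eq_bot.mp h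
      have hle := LinearMap.finrank_le_finrank_of_injective hinj
      rw [Module.finrank_fintype_fun_eq_card, Module.finrank_fintype_fun_eq_card,
        Fintype.card_fin] at hle
      omega
    obtain ⟨v, hvker, hv0⟩ := Submodule.exists_mem_ne_zero_of_ne_bot hker
    have hveq : ∀ q : {q // q ∈ F'}, ∑ i, M q i * v i = 0 := by
      intro q
      have := congrFun (LinearMap.mem_ker.mp hvker) q
      simpa [Matrix.mulVecLin_apply, Matrix.mulVec, dotProduct] using this
    refine ⟨(⟨v, hv0⟩, ∑ i, U p0 hp0 i * v i), ?_⟩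
    intro p hp
    show (∑ i, U p0 hp0 i * v i) = p ⟨v, hv0⟩
    rcases eq_or_ne p p0 with rfl | hne
    · exact (hU p hp ⟨v, hv0⟩).symm
    · have hq : p ∈ F' := Finset.mem_erase.mpr ⟨hne, hp⟩
      have := hveq ⟨p, hq⟩
      simp only [hM, sub_mul, Finset.sum_sub_distrib, sub_eq_zero] at this
      rw [hU p hp, ← this]
  · rintro ⟨⟨⟨v, hv⟩, a⟩, hx⟩
    have h0 : a = 0 := by
      have := hx (fun _ => 0) ⟨0, by simp⟩
      simpa [cubMember] using this
    obtain ⟨i, hi⟩ : ∃ i, v i ≠ 0 := by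
      by_contra h
      push_neg at h
      exact hv (funext h)
    have h1 : a = v i := by
      have := hx (fun w => w.1 i) ⟨Pi.single i 1, by
        intro w
        simp [Pi.single_apply, Finset.sum_ite_eq']⟩
      simpa [cubMember] using this
    rw [h0] at h1
    exact hi h1.symm
end

section
/- If every bridgeless graph has three cycles whose union is the whole edge set (Jaeger's 8-flow theorem), then every bridgeless graph has 7 cycles such that every edge belongs to exactly 4 of them. -/
open scoped symmDiff

/-- An edge set `C` of the graph `G` is a cycle if every vertex is incident with an even
number of edges of `C`. -/
def IsGraphCycle {V : Type} [Fintype V] [DecidableEq V] (G : SimpleGraph V)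
    (C : Finset (Sym2 V)) : Prop :=
  ↑C ⊆ G.edgeSet ∧ ∀ v : V, Even ((C.filter (fun e => v ∈ e)).card)

/-- `G` is bridgeless: no edge lies in no cycle. -/
def Bridgeless {V : Type} [Fintype V] [DecidableEq V] (G : SimpleGraph V) : Prop :=
  ¬ ∃ e ∈ G.edgeSet, ∀ C : Finset (Sym2 V), IsGraphCycle G C → e ∉ C

lemma filter_symmDiff' {α : Type*} [DecidableEq α] (s t : Finset α) (p : α → Prop)
    [DecidablePred p] : (s ∆ t).filter p = s.filter p ∆ t.filter p := by
  ext a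
  simp only [Finset.mem_filter, Finset.mem_symmDiff]
  tauto

lemma even_card_symmDiff {α : Type*} [DecidableEq α] {s t : Finset α}
    (hs : Even s.card) (ht : Even t.card) : Even (s ∆ t).card := by
  have h1 : s ∆ t = (s ∪ t) \ (s ∩ t) := by
    ext a; simp [Finset.mem_symmDiff]; tauto
  have h2 : (s ∩ t) ⊆ (s ∪ t) := (Finset.inter_subset_left).trans Finset.subset_union_left
  have h3 : ((s ∪ t) \ (s ∩ t)).card = (s ∪ t).card - (s ∩ t).card := Finset.card_sdiff_of_subset h2
  have h4 : (s ∩ t).card ≤ (s ∪ t).card := Finset.card_le_card h2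
  have h5 : (s ∪ t).card + (s ∩ t).card = s.card + t.card :=
    Finset.card_union_add_card_inter s t
  rw [Nat.even_iff] at hs ht ⊢
  rw [h1, h3]
  omega

lemma cycle_symmDiff {V : Type} [Fintype V] [DecidableEq V] {G : SimpleGraph V}
    {A B : Finset (Sym2 V)} (hA : IsGraphCycle G A) (hB : IsGraphCycle G B) :
    IsGraphCycle G (A ∆ B) := by
  constructor
  · intro e he
    simp only [Finset.mem_coe, Finset.mem_symmDiff] at he
    rcases he with ⟨h, _⟩ | ⟨h, _⟩
    · exact hA.1 h
    · exact hB.1 h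
  · intro v
    rw [filter_symmDiff']
    exact even_card_symmDiff (hA.2 v) (hB.2 v)

/-- If every bridgeless graph has three cycles whose union is the whole edge
set (Jaeger's 8-flow theorem), then every bridgeless graph has 7 cycles such that every edge
belongs to exactly 4 of them. -/
theorem stmt_18 :
    (∀ (V : Type) [Fintype V] [DecidableEq V] (G : SimpleGraph V), Bridgeless G →
      ∃ C1 C2 C3 : Finset (Sym2 V), IsGraphCycle G C1 ∧ IsGraphCycle G C2 ∧
        IsGraphCycle G C3 ∧ ↑(C1 ∪ C2 ∪ C3) = G.edgeSet) →
    (∀ (V : Type) [Fintype V] [DecidableEq V] (G : SimpleGraph V), Bridgeless G →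
      ∃ D : Fin 7 → Finset (Sym2 V), (∀ i, IsGraphCycle G (D i)) ∧
        ∀ e ∈ G.edgeSet, (Finset.univ.filter (fun i => e ∈ D i)).card = 4) := by
  intro H V _ _ G hG
  obtain ⟨C1, C2, C3, h1, h2, h3, hU⟩ := H V G hG
  refine ⟨![C1, C2, C1 ∆ C2, C3, C1 ∆ C3, C2 ∆ C3, C1 ∆ C2 ∆ C3], ?_, ?_⟩
  · intro i
    fin_cases i <;>
      simp only [Matrix.cons_val_zero, Matrix.cons_val_one, Matrix.head_cons,
        Matrix.cons_val_succ] <;>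
      first
        | exact h1
        | exact h2
        | exact h3
        | exact cycle_symmDiff h1 h2
        | exact cycle_symmDiff h1 h3
        | exact cycle_symmDiff h2 h3
        | exact cycle_symmDiff (cycle_symmDiff h1 h2) h3
  · intro e he
    rw [← hU] at he
    simp only [Finset.coe_union, Set.mem_union, Finset.mem_coe] at he
    have m5 : ![C1, C2, C1 ∆ C2, C3, C1 ∆ C3, C2 ∆ C3, C1 ∆ C2 ∆ C3] 5 = C2 ∆ C3 := rfl
    have m6 : ![C1, C2, C1 ∆ C2, C3, C1 ∆ C3, C2 ∆ C3, C1 ∆ C2 ∆ C3] 6 = C1 ∆ C2 ∆ C3 := rfl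
    have key : ∀ (S : Finset (Fin 7)),
        Finset.filter (fun i => e ∈ ![C1, C2, C1 ∆ C2, C3, C1 ∆ C3, C2 ∆ C3, C1 ∆ C2 ∆ C3] i)
          Finset.univ = S → S.card = 4 →
        (Finset.filter (fun i => e ∈ ![C1, C2, C1 ∆ C2, C3, C1 ∆ C3, C2 ∆ C3, C1 ∆ C2 ∆ C3] i)
          Finset.univ).card = 4 := by
      intro S hS hc; rw [hS]; exact hc
    rcases em (e ∈ C1) with p1 | p1 <;> rcases em (e ∈ C2) with p2 | p2 <;>
      rcases em (e ∈ C3) with p3 | p3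
    · exact key {0, 1, 3, 6} (by ext i; fin_cases i <;> simp [m5, m6, Finset.mem_symmDiff, p1, p2, p3]) (by decide)
    · exact key {0, 1, 4, 5} (by ext i; fin_cases i <;> simp [m5, m6, Finset.mem_symmDiff, p1, p2, p3]) (by decide)
    · exact key {0, 2, 3, 5} (by ext i; fin_cases i <;> simp [m5, m6, Finset.mem_symmDiff, p1, p2, p3]) (by decide)
    · exact key {0, 2, 4, 6} (by ext i; fin_cases i <;> simp [m5, m6, Finset.mem_symmDiff, p1, p2, p3]) (by decide)
    · exact key {1, 2, 3, 4} (by ext i; fin_cases i <;> simp [m5, m6, Finset.mem_symmDiff, p1, p2, p3]) (by decide)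
    · exact key {1, 2, 5, 6} (by ext i; fin_cases i <;> simp [m5, m6, Finset.mem_symmDiff, p1, p2, p3]) (by decide)
    · exact key {3, 4, 5, 6} (by ext i; fin_cases i <;> simp [m5, m6, Finset.mem_symmDiff, p1, p2, p3]) (by decide)
    · exact absurd he (by tauto)
end
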